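/- Suppose that every element of M with a right inverse is a unit and every element of M with a left inverse is a unit, and that Kl(T_M) has countable powers of 1. Then: (i) M is left-cancellative up to invertibles on the left; (ii) M is right-coprime-cancellative; and (iii) every family w : I → M indexed by a nonempty countable set I has a left-gcd, and this left-gcd is unique up to invertibles on the right (any two left-gcds δ, δ' of the family satisfy δ' = δ * χ for some unit χ of M). -/

import Mathlib

/-- Kleisli composition for the monad `T_M X = Option (M × X)`. -/
def KlComp {M : Type} [Monoid M] {X Y Z : Type}
    (g : Y → Option (M × Z)) (f : X → Option (M × Y)) : X → Option (M × Z) :=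
  fun x => (f x).bind fun p => (g p.2).map fun q => (p.1 * q.1, q.2)

/-- The Kleisli identity on `X`. -/
def KlId (M : Type) [Monoid M] (X : Type) : X → Option (M × X) :=
  fun x => some (1, x)

/-- A Kleisli morphism is an isomorphism when it has a two-sided inverse. -/
def IsKlIso {M : Type} [Monoid M] {X Y : Type} (f : X → Option (M × Y)) : Prop :=
  ∃ g : Y → Option (M × X), KlComp g f = KlId M X ∧ KlComp f g = KlId M Y

/-- The class `Surj` of Kleisli morphisms. -/
def KlSurj {M X Y : Type} (f : X → Option (M × Y)) : Prop :=
  ∀ y : Y, ∃ (x : X) (υ : M), f x = some (υ, y)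

/-- The class `Inj` of Kleisli morphisms. -/
def KlInj {M X Y : Type} (f : X → Option (M × Y)) : Prop :=
  ∀ (x x' : X) (υ υ' : M) (y : Y), f x = some (υ, y) → f x' = some (υ', y) → x = x'

/-- The class `Tot` of Kleisli morphisms. -/
def KlTot {M X Y : Type} (f : X → Option (M × Y)) : Prop :=
  ∀ x : X, f x ≠ none

/-- The class `Inv` of Kleisli morphisms. -/
def KlInv {M : Type} [Monoid M] {X Y : Type} (f : X → Option (M × Y)) : Prop :=
  ∀ (x : X) (υ : M) (y : Y), f x = some (υ, y) → IsUnit υ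
/-- `Kl(T_M)` has countable powers of `1`. -/
def HasCountablePowersOfOne (M : Type) [Monoid M] : Prop :=
  ∃ (P : Type) (π : ℕ → P → Option (M × PUnit)),
    ∀ (X : Type) (f : ℕ → X → Option (M × PUnit)),
      ∃! h : X → Option (M × P), ∀ n, KlComp (π n) h = f n
/-- `u` left-divides the family `w`. -/
def LeftDividesFam {M I : Type} [Monoid M] (u : M) (w : I → M) : Prop :=
  ∃ v : I → M, ∀ i, u * v i = w i

/-- `δ` is a left-gcd of the family `w`. -/
def IsLeftGcd {M I : Type} [Monoid M] (δ : M) (w : I → M) : Prop :=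
  LeftDividesFam δ w ∧ ∀ d : M, LeftDividesFam d w → ∃ c : M, d * c = δ

/-- The family `w` is left-coprime: every left-divisor has a right inverse. -/
def LeftCoprimeFam {M I : Type} [Monoid M] (w : I → M) : Prop :=
  ∀ d : M, LeftDividesFam d w → ∃ y : M, d * y = 1

/-- `M` is left-cancellative up to invertibles on the left. -/
def LeftCancellativeUpToInv (M : Type) [Monoid M] : Prop :=
  ∀ (I : Type) [Countable I] [Nonempty I] (w : M) (u v : I → M),
    (∀ i, w * u i = w * v i) → ∃ x : Mˣ, ∀ i, u i = ↑x * v i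

/-- `M` is right-coprime-cancellative. -/
def RightCoprimeCancellative (M : Type) [Monoid M] : Prop :=
  ∀ (I : Type) [Countable I] [Nonempty I] (u v : M) (w : I → M),
    LeftCoprimeFam w → (∀ i, u * w i = v * w i) → u = v


section PowerAux

variable {M P : Type} [Monoid M] (π : ℕ → P → Option (M × PUnit))

/-- `(c, p)` is a solution for the sequence `g` in the power `P`. -/
def KlSol (g : ℕ → M) (c : M) (p : P) : Prop :=
  ∀ n, ∃ t : M, π n p = some (t, PUnit.unit) ∧ c * t = g n

lemma klSol_comp {g : ℕ → M} {c : M} {p : P} (h : KlSol π g c p) (n : ℕ) :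
    KlComp (π n) (fun _ : PUnit => some (c, p)) = fun _ => some (g n, PUnit.unit) := by
  funext x
  obtain ⟨t, ht, hct⟩ := h n
  simp [KlComp, ht, hct]

variable (H : ∀ (X : Type) (f : ℕ → X → Option (M × PUnit)),
    ∃! h : X → Option (M × P), ∀ n, KlComp (π n) h = f n)

include H

lemma klSol_exists (g : ℕ → M) : ∃ c p, KlSol π g c p := by
  obtain ⟨h, hh, -⟩ := H PUnit (fun n _ => some (g n, PUnit.unit))
  have key : ∀ n, KlComp (π n) h PUnit.unit = some (g n, PUnit.unit) :=
    fun n => congrFun (hh n) PUnit.unit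
  match hc : h PUnit.unit with
  | none =>
    exfalso
    have := key 0
    simp only [KlComp, hc, Option.bind] at this
    cases this
  | some (c, p) =>
    refine ⟨c, p, fun n => ?_⟩
    have hkn := key n
    simp only [KlComp, hc, Option.bind] at hkn
    match hp : π n p with
    | none => rw [hp] at hkn; simp at hkn
    | some (t, u) =>
      rw [hp] at hkn
      cases u
      simp only [Option.map_some] at hkn
      exact ⟨t, rfl, congrArg Prod.fst (Option.some_inj.mp hkn)⟩

lemma klSol_unique {g : ℕ → M} {c c' : M} {p p' : P}
    (h1 : KlSol π g c p) (h2 : KlSol π g c' p') : c = c' ∧ p = p' := by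
  obtain ⟨h, -, hu⟩ := H PUnit (fun n _ => some (g n, PUnit.unit))
  have e1 := hu _ (fun n => klSol_comp π h1 n)
  have e2 := hu _ (fun n => klSol_comp π h2 n)
  have := congrFun (e1.trans e2.symm) PUnit.unit
  simpa using this

lemma klCancel (hr : ∀ x : M, (∃ y : M, x * y = 1) → IsUnit x)
    (w a b : M) (hw : w * a = w * b) : a = b := by
  obtain ⟨c, p, hcp⟩ := klSol_exists π H (fun n => if n = 0 then a else b)
  obtain ⟨e, q, heq⟩ := klSol_exists π H (fun _ => (1 : M))
  have S1 : KlSol π (fun _ => w * a) (w * c) p := by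
    intro n
    obtain ⟨t, ht, hct⟩ := hcp n
    have hct' : c * t = if n = 0 then a else b := hct
    refine ⟨t, ht, ?_⟩
    show w * c * t = w * a
    rw [mul_assoc, hct']
    by_cases hn : n = 0 <;> simp [hn, hw]
  have S2 : KlSol π (fun _ => w * a) (w * a * e) q := by
    intro n
    obtain ⟨t, ht, het⟩ := heq n
    have het' : e * t = 1 := het
    exact ⟨t, ht, show w * a * e * t = w * a by rw [mul_assoc, het', mul_one]⟩
  obtain ⟨-, hpq⟩ := klSol_unique π H S1 S2
  subst hpq
  obtain ⟨t0, ht0, het0⟩ := heq 0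
  obtain ⟨ε, hε⟩ := hr e ⟨t0, het0⟩
  have key : ∀ n, (if n = 0 then a else b) = c * (↑ε⁻¹ : M) := by
    intro n
    obtain ⟨t, ht, hct⟩ := hcp n
    have hct' : c * t = if n = 0 then a else b := hct
    obtain ⟨t', ht', het⟩ := heq n
    have het' : e * t' = 1 := het
    rw [ht] at ht'
    have htt : t = t' := congrArg Prod.fst (Option.some_inj.mp ht')
    have ht'' : t' = (↑ε⁻¹ : M) := by
      have h1 : (↑ε⁻¹ : M) * (e * t') = (↑ε⁻¹ : M) * 1 := by rw [het']
      rw [← hε, ← mul_assoc, Units.inv_mul, one_mul, mul_one] at h1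
      exact h1
    rw [← hct', htt, ht'']
  have ha : a = c * (↑ε⁻¹ : M) := by simpa using key 0
  have hb : b = c * (↑ε⁻¹ : M) := by simpa using key 1
  rw [ha, hb]

end PowerAux

theorem monoid_properties_of_countable_powers (M : Type) [Monoid M]
    (hr : ∀ x : M, (∃ y : M, x * y = 1) → IsUnit x)
    (hl : ∀ x : M, (∃ y : M, y * x = 1) → IsUnit x)
    (hpow : HasCountablePowersOfOne M) :
    LeftCancellativeUpToInv M ∧
    RightCoprimeCancellative M ∧
    (∀ (I : Type) [Countable I] [Nonempty I] (w : I → M),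
      (∃ δ : M, IsLeftGcd δ w) ∧
      (∀ δ δ' : M, IsLeftGcd δ w → IsLeftGcd δ' w →
        ∃ χ : Mˣ, δ' = δ * ↑χ)) := by
  obtain ⟨P, π, H⟩ := hpow
  have cancel : ∀ w a b : M, w * a = w * b → a = b := klCancel π H hr
  have gcd_ex : ∀ (I : Type) [Countable I] [Nonempty I] (w : I → M),
      ∃ δ : M, IsLeftGcd δ w ∧ ∀ u v : M, (∀ i, u * w i = v * w i) → u * δ = v * δ := by
    intro I _ _ w
    obtain ⟨e, he⟩ := exists_surjective_nat I
    obtain ⟨d, q, hdq⟩ := klSol_exists π H (fun n => w (e n))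
    choose t ht hdt using hdq
    have hdt' : ∀ n, d * t n = w (e n) := hdt
    have hdq' : KlSol π (fun n => w (e n)) d q := fun n => ⟨t n, ht n, hdt n⟩
    refine ⟨d, ⟨⟨fun i => t (he i).choose, fun i => ?_⟩, ?_⟩, ?_⟩
    · rw [hdt']
      exact congrArg w (he i).choose_spec
    · rintro d' ⟨cfam, hc⟩
      obtain ⟨ε, q', hεq⟩ := klSol_exists π H (fun n => cfam (e n))
      have S : KlSol π (fun n => w (e n)) (d' * ε) q' := by
        intro n
        obtain ⟨s, hs, hεs⟩ := hεq n
        have hεs' : ε * s = cfam (e n) := hεs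
        exact ⟨s, hs, show d' * ε * s = w (e n) by rw [mul_assoc, hεs', hc]⟩
      exact ⟨ε, (klSol_unique π H S hdq').1⟩
    · intro u v huv
      have S1 : KlSol π (fun n => u * w (e n)) (u * d) q :=
        fun n => ⟨t n, ht n, show u * d * t n = u * w (e n) by rw [mul_assoc, hdt']⟩
      have S2 : KlSol π (fun n => u * w (e n)) (v * d) q :=
        fun n => ⟨t n, ht n, show v * d * t n = u * w (e n) by rw [mul_assoc, hdt', huv]⟩
      exact (klSol_unique π H S1 S2).1
  refine ⟨?_, ?_, ?_⟩
  · intro I _ _ w u v h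
    exact ⟨1, fun i => by simpa using cancel w (u i) (v i) (h i)⟩
  · intro I _ _ u v w hcop huv
    obtain ⟨δ, ⟨hdiv, -⟩, hkey⟩ := gcd_ex I w
    have hud : u * δ = v * δ := hkey u v huv
    obtain ⟨y, hy⟩ := hcop δ hdiv
    obtain ⟨x, rfl⟩ := hr δ ⟨y, hy⟩
    calc u = u * ↑x * ↑x⁻¹ := by rw [mul_assoc, Units.mul_inv, mul_one]
    _ = v * ↑x * ↑x⁻¹ := by rw [hud]
    _ = v := by rw [mul_assoc, Units.mul_inv, mul_one]
  · intro I _ _ w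
    obtain ⟨δ, hδ, -⟩ := gcd_ex I w
    refine ⟨⟨δ, hδ⟩, ?_⟩
    intro δ1 δ2 h1 h2
    obtain ⟨c, hc⟩ := h2.2 δ1 h1.1
    obtain ⟨c', hc'⟩ := h1.2 δ2 h2.1
    have hcc : δ1 * (c * c') = δ1 * 1 := by rw [← mul_assoc, hc, hc', mul_one]
    have hone : c * c' = 1 := cancel δ1 (c * c') 1 hcc
    obtain ⟨χ, hχ⟩ := hr c ⟨c', hone⟩
    exact ⟨χ, by rw [hχ, hc]⟩
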